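/- For Lebesgue-almost every x ∈ (0,θ), the inequality a_n(x) > n·log n holds for infinitely many n ∈ ℕ₊. -/

import Mathlib

noncomputable section
open MeasureTheory Filter Set

namespace Theta

/-- θ = 1/√m -/
def th (m : ℕ) : ℝ := 1 / Real.sqrt m

/-- The θ-expansion map T_θ on [0,θ]. -/
def T (m : ℕ) (x : ℝ) : ℝ := if x = 0 then 0 else 1 / x - th m * ⌊1 / (x * th m)⌋₊

/-- The n-th digit a_n(x) (n ≥ 1), a_n(x) = a_1(T_θ^{n-1} x) with a_1(x) = ⌊1/(xθ)⌋. -/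
def a (m n : ℕ) (x : ℝ) : ℕ := ⌊1 / ((T m)^[n - 1] x * th m)⌋₊

/-- Ω: the irrationals in (0,θ). -/
def Omega (m : ℕ) : Set ℝ := {x | x ∈ Set.Ioo 0 (th m) ∧ Irrational x}

/-- Convergent numerators, shifted: `p m x (n+1)` is p_n(x), `p m x 0` is p_{-1} = 1. -/
def p (m : ℕ) (x : ℝ) : ℕ → ℝ
  | 0 => 1
  | 1 => 0
  | n + 2 => (a m (n + 1) x) * th m * p m x (n + 1) + p m x n

/-- Convergent denominators, shifted: `q m x (n+1)` is q_n(x), `q m x 0` is q_{-1} = 0. -/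
def q (m : ℕ) (x : ℝ) : ℕ → ℝ
  | 0 => 0
  | 1 => 1
  | n + 2 => (a m (n + 1) x) * th m * q m x (n + 1) + q m x n

section Aux
variable {m : ℕ}

lemma th_pos (hm : 2 ≤ m) : 0 < th m := by
  have hm' : (0:ℝ) < m := by exact_mod_cast lt_of_lt_of_le two_pos hm
  exact div_pos one_pos (Real.sqrt_pos.2 hm')

lemma th_sq (hm : 2 ≤ m) : (m : ℝ) * (th m * th m) = 1 := by
  have hm' : (0:ℝ) < m := by exact_mod_cast lt_of_lt_of_le two_pos hm
  unfold th
  rw [div_mul_div_comm, one_mul, Real.mul_self_sqrt hm'.le]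
  field_simp

lemma th_lt_one (hm : 2 ≤ m) : th m < 1 := by
  have hm' : (1:ℝ) < m := by exact_mod_cast lt_of_lt_of_le one_lt_two hm
  have h1 : (1:ℝ) < Real.sqrt m := by
    have := Real.sqrt_lt_sqrt (by norm_num) hm'
    simpa using this
  rw [th, div_lt_one (lt_trans one_pos h1)]
  exact h1

/-- 1/θ = m θ -/
lemma one_div_th (hm : 2 ≤ m) : 1 / th m = (m:ℝ) * th m := by
  have h := th_sq hm
  have h0 := (th_pos hm).ne'
  field_simp
  nlinarith [th_sq hm]

/-- the inverse branch map -/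
def V (m k : ℕ) (t : ℝ) : ℝ := 1 / ((k:ℝ) * th m + t)

lemma V_denom_pos (hm : 2 ≤ m) {k : ℕ} (hk : m ≤ k) {t : ℝ} (ht : 0 ≤ t) :
    0 < (k:ℝ) * th m + t := by
  have : (0:ℝ) < (k:ℝ) := by
    have : (0:ℕ) < k := lt_of_lt_of_le (by omega) hk
    exact_mod_cast this
  nlinarith [th_pos hm]

lemma a_one_ge (hm : 2 ≤ m) {x : ℝ} (hx : x ∈ Ioo 0 (th m)) : m ≤ a m 1 x := by
  have hθ := th_pos hm
  have hx0 := hx.1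
  have hxθ : 0 < x * th m := mul_pos hx0 hθ
  have hlt : x * th m < th m * th m := by nlinarith [hx.2]
  have : (m:ℝ) ≤ 1 / (x * th m) := by
    rw [le_div_iff₀ hxθ]
    nlinarith [th_sq hm]
  have : m ≤ ⌊1 / (x * th m)⌋₊ := Nat.le_floor this
  simpa [a] using this

lemma T_apply {x : ℝ} (hx : x ≠ 0) : T m x = 1 / x - th m * (a m 1 x) := by
  simp [T, a, hx]

lemma T_mem (hm : 2 ≤ m) {x : ℝ} (hx : x ∈ Ioo 0 (th m)) : T m x ∈ Ico 0 (th m) := by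
  have hθ := th_pos hm
  have hx0 := hx.1
  have hxθ : 0 < x * th m := mul_pos hx0 hθ
  have hr : (1:ℝ) / (x * th m) = (1/x) * (1 / th m) := by field_simp
  rw [T_apply hx0.ne']
  set k : ℕ := a m 1 x with hk
  have hkfl : (k:ℝ) = (⌊1 / (x * th m)⌋₊ : ℝ) := by simp [hk, a]
  have hfl : (k:ℝ) ≤ 1 / (x * th m) := by
    rw [hkfl]; exact Nat.floor_le (by positivity)
  have hfl2 : 1 / (x * th m) < (k:ℝ) + 1 := by
    rw [hkfl]; exact Nat.lt_floor_add_one _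
  have hid : 1 / (x * th m) * th m = 1 / x := by field_simp
  constructor
  · have h2 := mul_le_mul_of_nonneg_right hfl hθ.le
    rw [hid] at h2
    linarith
  · have h2 := mul_lt_mul_of_pos_right hfl2 hθ
    rw [hid] at h2
    nlinarith

lemma T_inv_eq (hm : 2 ≤ m) {x : ℝ} (hx : x ∈ Ioo 0 (th m)) :
    V m (a m 1 x) (T m x) = x := by
  have hx0 := hx.1
  rw [V, T_apply hx0.ne']
  have : (↑(a m 1 x) : ℝ) * th m + (1 / x - th m * ↑(a m 1 x)) = 1/x := by ring
  rw [this]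
  field_simp

lemma V_mem (hm : 2 ≤ m) {k : ℕ} (hk : m ≤ k) {t : ℝ} (ht : t ∈ Ioo 0 (th m)) :
    V m k t ∈ Ioo 0 (th m) := by
  have hθ := th_pos hm
  have hd := V_denom_pos hm hk ht.1.le
  constructor
  · exact div_pos one_pos hd
  · rw [V, div_lt_iff₀ hd]
    have hm' : (m:ℝ) ≤ k := by exact_mod_cast hk
    have : (1:ℝ) = th m * ((m:ℝ) * th m) := by nlinarith [th_sq hm]
    nlinarith [ht.1, th_sq hm]

lemma a_one_V (hm : 2 ≤ m) {k : ℕ} (hk : m ≤ k) {t : ℝ} (ht : t ∈ Ico 0 (th m)) :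
    a m 1 (V m k t) = k := by
  have hθ := th_pos hm
  have hd := V_denom_pos hm hk ht.1
  have hV : V m k t ≠ 0 := (div_pos one_pos hd).ne'
  have key : 1 / (V m k t * th m) = (k:ℝ) + t / th m := by
    rw [V]; field_simp
  have h0 : 0 ≤ t / th m := div_nonneg ht.1 hθ.le
  have h1 : t / th m < 1 := (div_lt_one hθ).2 ht.2
  simp only [a, Function.iterate_zero, id_eq, Nat.sub_self]
  rw [key, add_comm, Nat.floor_add_natCast h0, Nat.floor_eq_zero.2 h1, zero_add]

lemma T_V (hm : 2 ≤ m) {k : ℕ} (hk : m ≤ k) {t : ℝ} (ht : t ∈ Ico 0 (th m)) :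
    T m (V m k t) = t := by
  have hθ := th_pos hm
  have hd := V_denom_pos hm hk ht.1
  have hV : V m k t ≠ 0 := (div_pos one_pos hd).ne'
  rw [T_apply hV, a_one_V hm hk ht, V]
  field_simp
  ring

-- words and cylinder maps
def Psi (m : ℕ) : List ℕ → ℝ → ℝ
  | [], t => t
  | k :: w, t => V m k (Psi m w t)

@[simp] lemma Psi_nil (t : ℝ) : Psi m [] t = t := rfl
@[simp] lemma Psi_cons (k : ℕ) (w : List ℕ) (t : ℝ) :
    Psi m (k :: w) t = V m k (Psi m w t) := rfl

lemma Psi_append (w : List ℕ) (k : ℕ) (t : ℝ) :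
    Psi m (w ++ [k]) t = Psi m w (V m k t) := by
  induction w with
  | nil => rfl
  | cons j w ih => simp [Psi_cons, ih]

def dig (m J : ℕ) (x : ℝ) : List ℕ := (List.range J).map fun j => a m (j+1) x

lemma a_succ_eq (j : ℕ) (x : ℝ) : a m (j+1) x = a m 1 ((T m)^[j] x) := by
  simp [a]

lemma dig_succ (J : ℕ) (x : ℝ) :
    dig m (J+1) x = dig m J x ++ [a m (J+1) x] := by
  simp [dig, List.range_succ]

lemma expansion (hm : 2 ≤ m) {x : ℝ} (htraj : ∀ j, (T m)^[j] x ∈ Ioo 0 (th m)) :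
    ∀ J, Psi m (dig m J x) ((T m)^[J] x) = x := by
  intro J
  induction J with
  | zero => simp [dig]
  | succ J ih =>
    rw [dig_succ, Psi_append]
    have h1 : (T m)^[J+1] x = T m ((T m)^[J] x) := Function.iterate_succ_apply' _ _ _
    have h2 : a m (J+1) x = a m 1 ((T m)^[J] x) := a_succ_eq J x
    rw [h1, h2]
    have h3 : T m ((T m)^[J] x) ∈ Ico 0 (th m) := T_mem hm (htraj J)
    rw [T_inv_eq hm (htraj J)]
    exact ih

lemma mobius_diff {A B C D t u : ℝ} (h1 : C + D*t ≠ 0) (h2 : C + D*u ≠ 0) :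
    (A + B*t)/(C+D*t) - (A+B*u)/(C+D*u) = (B*C - A*D)*(t-u)/((C+D*t)*(C+D*u)) := by
  rw [div_sub_div _ _ h1 h2]; congr 1
  ring

lemma rep (hm : 2 ≤ m) : ∀ (w : List ℕ), (∀ k ∈ w, m ≤ k) → ∃ A B C D : ℝ,
    0 ≤ A ∧ 0 ≤ B ∧ 0 < C ∧ 0 ≤ D ∧
      ∀ t : ℝ, 0 ≤ t → Psi m w t = (A + B * t)/(C + D * t) := by
  intro w
  induction w with
  | nil =>
    intro _
    exact ⟨0, 1, 1, 0, le_refl _, zero_le_one, one_pos, le_refl _, fun t _ => by simp⟩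
  | cons k w ih =>
    intro h
    obtain ⟨A, B, C, D, hA, hB, hC, hD, hrep⟩ := ih (fun j hj => h j (List.mem_cons_of_mem _ hj))
    have hk : m ≤ k := h k List.mem_cons_self
    have hθ := th_pos hm
    have hkθ : 0 < (k:ℝ) * th m := by
      have : (0:ℝ) < (k:ℝ) := by
        have : (0:ℕ) < k := by omega
        exact_mod_cast this
      positivity
    refine ⟨C, D, (k:ℝ) * th m * C + A, (k:ℝ) * th m * D + B, hC.le, hD, by nlinarith, by nlinarith, ?_⟩
    intro t ht
    have hden : 0 < C + D * t := by nlinarith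
    have hnum : 0 ≤ A + B * t := by nlinarith
    have hden2 : 0 < ((k:ℝ) * th m * C + A) + ((k:ℝ) * th m * D + B) * t := by nlinarith
    rw [Psi_cons, hrep t ht, V]
    have key : (k:ℝ) * th m + (A + B*t)/(C + D*t)
        = (((k:ℝ) * th m * C + A) + ((k:ℝ) * th m * D + B) * t)/(C + D*t) := by
      field_simp
      ring
    rw [key, one_div_div]

lemma rep' (hm : 2 ≤ m) (w : List ℕ) (hw : ∀ k ∈ w, m ≤ k) : ∃ C D En : ℝ,
    0 < C ∧ 0 ≤ D ∧ 0 ≤ En ∧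
    (∀ t u : ℝ, 0 ≤ u → u ≤ t →
      |Psi m w t - Psi m w u| = En*(t-u)/((C+D*t)*(C+D*u))) ∧
    ((∀ t u : ℝ, 0 ≤ u → u ≤ t → Psi m w u ≤ Psi m w t) ∨
     (∀ t u : ℝ, 0 ≤ u → u ≤ t → Psi m w t ≤ Psi m w u)) := by
  obtain ⟨A, B, C, D, hA, hB, hC, hD, hrep⟩ := rep hm w hw
  have hden : ∀ t : ℝ, 0 ≤ t → 0 < C + D * t := fun t ht => by nlinarith
  have hdiff : ∀ t u : ℝ, 0 ≤ u → u ≤ t →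
      Psi m w t - Psi m w u = (B*C - A*D)*(t-u)/((C+D*t)*(C+D*u)) := by
    intro t u hu hut
    rw [hrep t (hu.trans hut), hrep u hu]
    exact mobius_diff (hden t (hu.trans hut)).ne' (hden u hu).ne'
  refine ⟨C, D, |B*C - A*D|, hC, hD, abs_nonneg _, ?_, ?_⟩
  · intro t u hu hut
    rw [hdiff t u hu hut, abs_div, abs_mul, abs_of_nonneg (sub_nonneg.2 hut),
      abs_of_pos (mul_pos (hden t (hu.trans hut)) (hden u hu))]
  · rcases le_or_gt 0 (B*C - A*D) with hE | hE
    · left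
      intro t u hu hut
      have := hdiff t u hu hut
      have hp : 0 ≤ (B*C - A*D)*(t-u)/((C+D*t)*(C+D*u)) := by
        apply div_nonneg (mul_nonneg hE (by linarith))
        exact (mul_pos (hden t (hu.trans hut)) (hden u hu)).le
      linarith
    · right
      intro t u hu hut
      have := hdiff t u hu hut
      have hp : (B*C - A*D)*(t-u)/((C+D*t)*(C+D*u)) ≤ 0 := by
        apply div_nonpos_of_nonpos_of_nonneg
        · exact mul_nonpos_of_nonpos_of_nonneg hE.le (by linarith)
        · exact (mul_pos (hden t (hu.trans hut)) (hden u hu)).le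
      linarith

lemma abs_telescope (g : ℕ → ℝ)
    (h : (∀ i, g (i+1) ≤ g i) ∨ (∀ i, g i ≤ g (i+1))) (n : ℕ) :
    ∑ i ∈ Finset.range n, |g (i+1) - g i| = |g n - g 0| := by
  rcases h with h | h
  · have hmono : Antitone g := antitone_nat_of_succ_le h
    have : ∀ i ∈ Finset.range n, |g (i+1) - g i| = g i - g (i+1) := by
      intro i _
      rw [abs_of_nonpos (by linarith [h i])]
      ring
    rw [Finset.sum_congr rfl this, Finset.sum_range_sub' g n,
      abs_of_nonpos (by linarith [hmono (Nat.zero_le n)])]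
    ring
  · have hmono : Monotone g := monotone_nat_of_le_succ h
    have : ∀ i ∈ Finset.range n, |g (i+1) - g i| = g (i+1) - g i := by
      intro i _
      rw [abs_of_nonneg (by linarith [h i])]
    rw [Finset.sum_congr rfl this, Finset.sum_range_sub g n,
      abs_of_nonneg (by linarith [hmono (Nat.zero_le n)])]

@[simp] lemma V_zero (k : ℕ) : V m k 0 = 1/((k:ℝ)*th m) := by simp [V]

lemma V_th (k : ℕ) : V m k (th m) = 1/(((k:ℝ)+1)*th m) := by
  rw [V]; ring_nf

lemma one_div_m_th (hm : 2 ≤ m) : 1/((m:ℝ)*th m) = th m := by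
  have hθ := th_pos hm
  have hm0 : ((m:ℝ)*th m) ≠ 0 := by positivity
  rw [div_eq_iff hm0]
  linear_combination -th_sq hm

/-- the length of the interval associated to the word `w` -/
def Lw (m : ℕ) (w : List ℕ) : ℝ := |Psi m w (th m) - Psi m w 0|

lemma Lw_nonneg (w : List ℕ) : 0 ≤ Lw m w := abs_nonneg _

lemma MB (hm : 2 ≤ m) {w : List ℕ} (hw : ∀ k ∈ w, m ≤ k) :
    volume (Psi m w '' Ioo 0 (th m)) ≤ ENNReal.ofReal (Lw m w) := by
  obtain ⟨C, D, En, hC, hD, hEn, habs, hmono⟩ := rep' hm w hw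
  have hsub : Psi m w '' Ioo 0 (th m) ⊆ uIcc (Psi m w 0) (Psi m w (th m)) := by
    rintro y ⟨t, ht, rfl⟩
    rcases hmono with hmono | hmono
    · exact Set.mem_uIcc.2 (Or.inl ⟨hmono t 0 le_rfl ht.1.le, hmono (th m) t ht.1.le ht.2.le⟩)
    · exact Set.mem_uIcc.2 (Or.inr ⟨hmono (th m) t ht.1.le ht.2.le, hmono t 0 le_rfl ht.1.le⟩)
  calc volume (Psi m w '' Ioo 0 (th m)) ≤ volume (uIcc (Psi m w 0) (Psi m w (th m))) :=
        measure_mono hsub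
    _ = ENNReal.ofReal |Psi m w (th m) - Psi m w 0| := Real.volume_interval
    _ = ENNReal.ofReal (Lw m w) := rfl

lemma SS (hm : 2 ≤ m) {w : List ℕ} (hw : ∀ k ∈ w, m ≤ k) {M : ℕ} (hM : m ≤ M) :
    ∑ k ∈ Finset.Icc m M, Lw m (w ++ [k]) ≤ (1 - (m:ℝ)/((M:ℝ)+1)) * Lw m w := by
  obtain ⟨C, D, En, hC, hD, hEn, habs, hmono⟩ := rep' hm w hw
  have hθ := th_pos hm
  set f : ℕ → ℝ := fun j => Psi m w (1/((j:ℝ)*th m)) with hf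
  have hterm : ∀ k : ℕ, m ≤ k → Lw m (w ++ [k]) = |f (k+1) - f k| := by
    intro k hk
    have hcast : ((k+1:ℕ):ℝ) = (k:ℝ)+1 := by push_cast; ring
    rw [Lw, Psi_append, Psi_append, V_th, V_zero]
    simp only [hf, hcast]
  have harg : ∀ j : ℕ, m ≤ j → 0 ≤ 1/((j:ℝ)*th m) := by
    intro j hj
    have : (0:ℝ) < (j:ℝ) := by exact_mod_cast (by omega : 0 < j)
    positivity
  have hdec : ∀ j : ℕ, m ≤ j → 1/(((j:ℝ)+1)*th m) ≤ 1/((j:ℝ)*th m) := by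
    intro j hj
    have hj0 : (0:ℝ) < (j:ℝ) := by exact_mod_cast (by omega : 0 < j)
    apply one_div_le_one_div_of_le (by positivity)
    nlinarith
  have hstep : ∀ i : ℕ, (0:ℝ) ≤ 1/(((m+i+1 : ℕ) : ℝ) * th m) ∧
      1/(((m+i+1 : ℕ) : ℝ) * th m) ≤ 1/(((m+i : ℕ) : ℝ) * th m) := by
    intro i
    refine ⟨harg (m+i+1) (by omega), ?_⟩
    have hc : ((m+i+1:ℕ):ℝ) = ((m+i:ℕ):ℝ)+1 := by push_cast; ring
    rw [hc]
    exact hdec (m+i) (by omega)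
  have hg : (∀ i, f (m+i+1) ≤ f (m+i)) ∨ (∀ i, f (m+i) ≤ f (m+i+1)) := by
    rcases hmono with hmono | hmono
    · left; intro i; exact hmono _ _ (hstep i).1 (hstep i).2
    · right; intro i; exact hmono _ _ (hstep i).1 (hstep i).2
  have hIcc : Finset.Icc m M = Finset.Ico m (M+1) := (Finset.Ico_add_one_right_eq_Icc m M).symm
  rw [hIcc, Finset.sum_congr rfl (fun k hk => hterm k (Finset.mem_Ico.1 hk).1),
    Finset.sum_Ico_eq_sum_range]
  have htel := abs_telescope (fun i => f (m+i)) hg (M+1-m)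
  have hshape : (∑ i ∈ Finset.range (M+1-m), |f (m+i+1) - f (m+i)|)
      = |f (m+(M+1-m)) - f (m+0)| := htel
  rw [hshape]
  have hMm : m + (M+1-m) = M+1 := by omega
  rw [hMm]
  have hfm : f m = Psi m w (th m) := by
    simp only [hf]; rw [one_div_m_th hm]
  set s : ℝ := 1/(((M:ℝ)+1)*th m) with hs
  have hfM : f (M+1) = Psi m w s := by
    simp only [hf, hs]
    norm_num
  have hs0 : 0 ≤ s := by rw [hs]; positivity
  have hm0' : (0:ℝ) < (m:ℝ) := by exact_mod_cast (by omega : 0 < m)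
  have hMc : (m:ℝ) ≤ (M:ℝ)+1 := by exact_mod_cast (by omega : m ≤ M+1)
  have hsθ : s ≤ th m := by
    have h2 : s ≤ 1/((m:ℝ)*th m) := by
      rw [hs]
      apply one_div_le_one_div_of_le (mul_pos hm0' hθ)
      exact mul_le_mul_of_nonneg_right hMc hθ.le
    rwa [one_div_m_th hm] at h2
  simp only [Nat.add_zero]
  rw [hfM, hfm, abs_sub_comm, habs (th m) s hs0 hsθ]
  have hLw : Lw m w = En*(th m - 0)/((C+D*th m)*(C+D*0)) := by
    rw [Lw, habs (th m) 0 le_rfl hθ.le]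
  rw [hLw]
  simp only [sub_zero, mul_zero, add_zero]
  have hM1 : (0:ℝ) < (M:ℝ)+1 := by positivity
  have hms : (1 - (m:ℝ)/((M:ℝ)+1)) = (th m - s)/(th m) := by
    rw [hs]
    field_simp
    linear_combination (-1:ℝ) * th_sq hm
  rw [hms]
  have hRHS : (th m - s)/(th m) * (En*th m/((C+D*th m)*C)) = En*(th m - s)/((C+D*th m)*C) := by
    field_simp
  rw [hRHS]
  have h1 : 0 < C + D*th m := by nlinarith
  exact div_le_div_of_nonneg_left (mul_nonneg hEn (sub_nonneg.2 hsθ))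
    (by positivity) (by nlinarith [mul_nonneg (mul_nonneg h1.le hD) hs0])


def Adm (m : ℕ) (M' : ℕ → ℕ) : ℕ → Set (List ℕ)
  | 0 => {[]}
  | J+1 => {u | ∃ w ∈ Adm m M' J, ∃ k, m ≤ k ∧ k ≤ M' (J+1) ∧ u = w ++ [k]}

lemma Adm_length {M' : ℕ → ℕ} : ∀ J, ∀ w ∈ Adm m M' J, w.length = J := by
  intro J
  induction J with
  | zero => intro w hw; simp only [Adm, mem_singleton_iff] at hw; simp [hw]
  | succ J ih =>
    rintro u ⟨w, hw, k, _, _, rfl⟩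
    simp [ih w hw]

lemma Adm_entries {M' : ℕ → ℕ} : ∀ J, ∀ w ∈ Adm m M' J, ∀ k ∈ w, m ≤ k := by
  intro J
  induction J with
  | zero => intro w hw; simp only [Adm, mem_singleton_iff] at hw; simp [hw]
  | succ J ih =>
    rintro u ⟨w, hw, k, hk1, _, rfl⟩ j hj
    rcases List.mem_append.1 hj with h | h
    · exact ih w hw j h
    · simp only [List.mem_singleton] at h; omega

lemma dig_mem_Adm (hm : 2 ≤ m) {x : ℝ} (htraj : ∀ j, (T m)^[j] x ∈ Ioo 0 (th m))
    {M' : ℕ → ℕ} (hbd : ∀ n, 1 ≤ n → a m n x ≤ M' n) :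
    ∀ J, dig m J x ∈ Adm m M' J := by
  intro J
  induction J with
  | zero => simp only [dig, List.range_zero, List.map_nil]; exact rfl
  | succ J ih =>
    refine ⟨dig m J x, ih, a m (J+1) x, ?_, hbd (J+1) (by omega), dig_succ J x⟩
    rw [a_succ_eq]
    exact a_one_ge hm (htraj J)

/-- partial sums of interval lengths over admissible words -/
def SJ (m : ℕ) (M' : ℕ → ℕ) (J : ℕ) : ENNReal :=
  ∑' w : (Adm m M' J : Set (List ℕ)), ENNReal.ofReal (Lw m w)

lemma SJ_zero (hm : 2 ≤ m) {M' : ℕ → ℕ} : SJ m M' 0 = ENNReal.ofReal (th m) := by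
  have h0 : Adm m M' 0 = {([] : List ℕ)} := rfl
  have h1 : SJ m M' 0 = ENNReal.ofReal (Lw m []) := by
    rw [SJ, h0]
    exact tsum_singleton ([] : List ℕ) (fun u => ENNReal.ofReal (Lw m u))
  rw [h1]
  congr 1
  rw [Lw]
  simp [abs_of_pos (th_pos hm)]

lemma append_eq_append {w1 w2 : List ℕ} {k1 k2 : ℕ} (hl : w1.length = w2.length)
    (he : w1 ++ [k1] = w2 ++ [k2]) : w1 = w2 ∧ k1 = k2 := by
  obtain ⟨h1, h2⟩ := List.append_inj he hl
  simp only [List.cons.injEq] at h2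
  exact ⟨h1, h2.1⟩

lemma SJ_succ_le (hm : 2 ≤ m) {M' : ℕ → ℕ} (hM' : ∀ n, m ≤ M' n) (J : ℕ) :
    SJ m M' (J+1) ≤ ENNReal.ofReal (1 - (m:ℝ)/((M' (J+1):ℝ)+1)) * SJ m M' J := by
  classical
  set c : ℝ := 1 - (m:ℝ)/((M' (J+1):ℝ)+1) with hc
  have hc0 : 0 ≤ c := by
    have h1 : (0:ℝ) < (M' (J+1):ℝ)+1 := by positivity
    have h2 : (m:ℝ) ≤ (M' (J+1):ℝ)+1 := by
      exact_mod_cast (by have := hM' (J+1); omega : m ≤ M' (J+1) + 1)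
    rw [hc]
    have := div_le_one_of_le₀ h2 h1.le
    linarith
  set F : List ℕ → ENNReal :=
    fun u => if u ∈ Adm m M' (J+1) then ENNReal.ofReal (Lw m u) else 0 with hF
  have h1 : SJ m M' (J+1) = ∑' u : List ℕ, F u := by
    rw [SJ]
    refine (tsum_subtype (Adm m M' (J+1)) (fun u => ENNReal.ofReal (Lw m u))).trans
      (tsum_congr fun u => ?_)
    by_cases h : u ∈ Adm m M' (J+1) <;> simp [hF, Set.indicator, h]
  set i : ↥(Adm m M' J) × ℕ → List ℕ := fun p => p.1.1 ++ [p.2] with hi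
  have hinj : Function.Injective i := by
    rintro ⟨⟨w1, hw1⟩, k1⟩ ⟨⟨w2, hw2⟩, k2⟩ he
    simp only [hi] at he
    have hl : w1.length = w2.length := by
      rw [Adm_length J w1 hw1, Adm_length J w2 hw2]
    obtain ⟨h1', h2'⟩ := append_eq_append hl he
    subst h1'
    simp [h2']
  have hsupp : Function.support F ⊆ Set.range i := by
    intro u hu
    have hmem : u ∈ Adm m M' (J+1) := by
      by_contra h
      simp [hF, h] at hu
    obtain ⟨w, hw, k, hk1, hk2, rfl⟩ := hmem
    exact ⟨⟨⟨w, hw⟩, k⟩, rfl⟩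
  rw [h1, ← hinj.tsum_eq hsupp, ENNReal.tsum_prod']
  have hinner : ∀ w : ↥(Adm m M' J), (∑' k : ℕ, F (i (w, k)))
      ≤ ENNReal.ofReal c * ENNReal.ofReal (Lw m w) := by
    intro w
    have hsum : (∑' k : ℕ, F (i (w, k)))
        = ∑ k ∈ Finset.Icc m (M' (J+1)), ENNReal.ofReal (Lw m (w.1 ++ [k])) := by
      rw [tsum_eq_sum (s := Finset.Icc m (M' (J+1)))]
      · refine Finset.sum_congr rfl fun k hk => ?_
        have hmem : w.1 ++ [k] ∈ Adm m M' (J+1) :=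
          ⟨w.1, w.2, k, (Finset.mem_Icc.1 hk).1, (Finset.mem_Icc.1 hk).2, rfl⟩
        simp [hF, hi, hmem]
      · intro k hk
        have hnot : w.1 ++ [k] ∉ Adm m M' (J+1) := by
          rintro ⟨w', hw', k', hk1', hk2', heq⟩
          have hl : w'.length = w.1.length := by
            rw [Adm_length J w' hw', Adm_length J w.1 w.2]
          obtain ⟨h1', h2'⟩ := append_eq_append hl heq.symm
          rw [Finset.mem_Icc] at hk
          omega
        simp [hF, hi, hnot]
    rw [hsum, ← ENNReal.ofReal_sum_of_nonneg (fun k _ => Lw_nonneg _), ← ENNReal.ofReal_mul hc0]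
    exact ENNReal.ofReal_le_ofReal
      (SS hm (Adm_entries J w.1 w.2) (hM' (J+1)))
  calc (∑' (w : ↥(Adm m M' J)), ∑' k : ℕ, F (i (w, k)))
      ≤ ∑' (w : ↥(Adm m M' J)), ENNReal.ofReal c * ENNReal.ofReal (Lw m w) :=
        ENNReal.tsum_le_tsum hinner
    _ = ENNReal.ofReal c * SJ m M' J := by rw [ENNReal.tsum_mul_left]; rfl

/-- the running product bound -/
def Pr (m : ℕ) (M' : ℕ → ℕ) (J : ℕ) : ℝ :=
  ∏ i ∈ Finset.range J, (1 - (m:ℝ)/((M' (i+1):ℝ)+1))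

lemma fac_nonneg (hm : 2 ≤ m) {M' : ℕ → ℕ} (hM' : ∀ n, m ≤ M' n) (n : ℕ) :
    0 ≤ 1 - (m:ℝ)/((M' n:ℝ)+1) ∧ 1 - (m:ℝ)/((M' n:ℝ)+1) ≤ 1 := by
  have h1 : (0:ℝ) < (M' n:ℝ)+1 := by positivity
  have h2 : (m:ℝ) ≤ (M' n:ℝ)+1 := by
    exact_mod_cast (by have := hM' n; omega : m ≤ M' n + 1)
  have h3 := div_le_one_of_le₀ h2 h1.le
  have h4 : 0 ≤ (m:ℝ)/((M' n:ℝ)+1) := by positivity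
  constructor <;> linarith

lemma Pr_nonneg (hm : 2 ≤ m) {M' : ℕ → ℕ} (hM' : ∀ n, m ≤ M' n) (J : ℕ) :
    0 ≤ Pr m M' J :=
  Finset.prod_nonneg fun i _ => (fac_nonneg hm hM' (i+1)).1

lemma SJ_le (hm : 2 ≤ m) {M' : ℕ → ℕ} (hM' : ∀ n, m ≤ M' n) (J : ℕ) :
    SJ m M' J ≤ ENNReal.ofReal (th m * Pr m M' J) := by
  induction J with
  | zero => rw [SJ_zero hm]; simp [Pr]
  | succ J ih =>
    calc SJ m M' (J+1) ≤ ENNReal.ofReal (1 - (m:ℝ)/((M' (J+1):ℝ)+1)) * SJ m M' J :=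
          SJ_succ_le hm hM' J
      _ ≤ ENNReal.ofReal (1 - (m:ℝ)/((M' (J+1):ℝ)+1)) * ENNReal.ofReal (th m * Pr m M' J) :=
          mul_le_mul_right ih _
      _ = ENNReal.ofReal ((1 - (m:ℝ)/((M' (J+1):ℝ)+1)) * (th m * Pr m M' J)) :=
          (ENNReal.ofReal_mul (fac_nonneg hm hM' (J+1)).1).symm
      _ = ENNReal.ofReal (th m * Pr m M' (J+1)) := by
          congr 1
          simp only [Pr, Finset.prod_range_succ]
          ring
  
/-- the uniformly bad set -/
def BadSet (m : ℕ) (M' : ℕ → ℕ) : Set ℝ :=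
  {x | x ∈ Ioo 0 (th m) ∧ (∀ j, (T m)^[j] x ∈ Ioo 0 (th m)) ∧ (∀ n, 1 ≤ n → a m n x ≤ M' n)}

lemma BadSet_subset (hm : 2 ≤ m) {M' : ℕ → ℕ} (J : ℕ) :
    BadSet m M' ⊆ ⋃ w : (Adm m M' J : Set (List ℕ)), Psi m w '' Ioo 0 (th m) := by
  rintro x ⟨hx, htraj, hbd⟩
  exact mem_iUnion.2 ⟨⟨dig m J x, dig_mem_Adm hm htraj hbd J⟩,
    ⟨(T m)^[J] x, htraj J, expansion hm htraj J⟩⟩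

lemma BadSet_measure_le (hm : 2 ≤ m) {M' : ℕ → ℕ} (hM' : ∀ n, m ≤ M' n) (J : ℕ) :
    volume (BadSet m M') ≤ ENNReal.ofReal (th m * Pr m M' J) := by
  haveI : Countable (Adm m M' J : Set (List ℕ)) := (Set.to_countable _).to_subtype
  calc volume (BadSet m M')
      ≤ volume (⋃ w : (Adm m M' J : Set (List ℕ)), Psi m w '' Ioo 0 (th m)) :=
        measure_mono (BadSet_subset hm J)
    _ ≤ ∑' w : (Adm m M' J : Set (List ℕ)), volume (Psi m w '' Ioo 0 (th m)) :=
        measure_iUnion_le _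
    _ ≤ SJ m M' J := ENNReal.tsum_le_tsum fun w => MB hm (Adm_entries J w.1 w.2)
    _ ≤ _ := SJ_le hm hM' J

lemma BadSet_null (hm : 2 ≤ m) {M' : ℕ → ℕ} (hM' : ∀ n, m ≤ M' n)
    (hdiv : Tendsto (fun J => Pr m M' J) atTop (nhds 0)) :
    volume (BadSet m M') = 0 := by
  refine le_antisymm ?_ zero_le
  have h1 : Tendsto (fun J => ENNReal.ofReal (th m * Pr m M' J)) atTop (nhds 0) := by
    have h2 : Tendsto (fun J => th m * Pr m M' J) atTop (nhds 0) := by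
      have := hdiv.const_mul (th m)
      simpa using this
    have := (ENNReal.continuous_ofReal.tendsto 0).comp h2
    simpa [Function.comp_def] using this
  exact ge_of_tendsto' h1 fun J => BadSet_measure_le hm hM' J

-- countability of the exceptional set
lemma fiber_countable (y : ℝ) :
    {x | x ∈ Ioo 0 (th m) ∧ T m x = y}.Countable := by
  apply Set.Countable.mono ?_ (Set.countable_range (fun k : ℕ => 1/(y + th m * k)))
  rintro x ⟨hx, hTx⟩
  refine ⟨a m 1 x, ?_⟩
  rw [T_apply hx.1.ne'] at hTx
  have h1 : y + th m * (a m 1 x) = 1/x := by linarith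
  show 1/(y + th m * (a m 1 x : ℝ)) = x
  rw [h1]
  field_simp

lemma iter_zero_countable (hm : 2 ≤ m) :
    ∀ j, {x | x ∈ Ioo 0 (th m) ∧ (T m)^[j] x = 0}.Countable := by
  intro j
  induction j with
  | zero =>
    apply Set.Countable.mono ?_ (Set.countable_singleton (0:ℝ))
    rintro x ⟨hx, hx0⟩
    simp only [Function.iterate_zero, id_eq] at hx0
    simp [hx0]
  | succ j ih =>
    set C : Set ℝ := {y | y ∈ Ioo 0 (th m) ∧ (T m)^[j] y = 0} ∪ {0} with hC
    have hCc : C.Countable := ih.union (Set.countable_singleton _)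
    apply Set.Countable.mono ?_ (Set.Countable.biUnion hCc
      (fun y _ => fiber_countable (m := m) y))
    rintro x ⟨hx, hx0⟩
    rw [Function.iterate_succ_apply] at hx0
    have hTx : T m x ∈ Ico 0 (th m) := T_mem hm hx
    rcases eq_or_lt_of_le hTx.1 with h0 | h0
    · refine mem_biUnion (Or.inr rfl) ⟨hx, h0.symm⟩
    · exact mem_biUnion (Or.inl ⟨⟨h0, hTx.2⟩, hx0⟩) ⟨hx, rfl⟩

lemma traj_bad_countable (hm : 2 ≤ m) :
    {x | x ∈ Ioo 0 (th m) ∧ ¬ (∀ j, (T m)^[j] x ∈ Ioo 0 (th m))}.Countable := by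
  classical
  apply Set.Countable.mono ?_
    (Set.countable_iUnion (fun j : ℕ => iter_zero_countable hm j))
  rintro x ⟨hx, hbad⟩
  have hex : ∃ j, (T m)^[j] x ∉ Ioo 0 (th m) := by
    push_neg at hbad; exact hbad
  have hj0 := Nat.find_spec hex
  have hpos : Nat.find hex ≠ 0 := by
    intro h
    rw [h] at hj0
    exact hj0 hx
  obtain ⟨j1, hj1⟩ : ∃ j1, Nat.find hex = j1 + 1 := ⟨Nat.find hex - 1, by omega⟩
  have hprev : (T m)^[j1] x ∈ Ioo 0 (th m) := by
    by_contra h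
    have := Nat.find_min' hex h
    omega
  have hmem : (T m)^[j1+1] x ∈ Ico 0 (th m) := by
    rw [Function.iterate_succ_apply']
    exact T_mem hm hprev
  rw [hj1] at hj0
  have h0 : (T m)^[j1+1] x = 0 := by
    by_contra h
    exact hj0 ⟨lt_of_le_of_ne hmem.1 (Ne.symm h), hmem.2⟩
  exact mem_iUnion.2 ⟨j1+1, hx, h0⟩

-- divergence of ∑ 1/(n log n)
lemma loglog_step {n : ℕ} (hn : 3 ≤ n) :
    Real.log (Real.log ((n:ℝ)+1)) - Real.log (Real.log n) ≤ ((n:ℝ) * Real.log n)⁻¹ := by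
  have hn3 : (3:ℝ) ≤ (n:ℝ) := by exact_mod_cast hn
  have hderiv : ∀ x : ℝ, 3 ≤ x →
      HasDerivAt (fun x : ℝ => Real.log (Real.log x)) ((Real.log x)⁻¹ * x⁻¹) x := by
    intro x hx
    have hx0 : x ≠ 0 := by linarith
    have hlx : Real.log x ≠ 0 := by
      have : 0 < Real.log x := Real.log_pos (by linarith)
      linarith
    exact (Real.hasDerivAt_log hlx).comp x (Real.hasDerivAt_log hx0)
  have hcont : ContinuousOn (fun x : ℝ => Real.log (Real.log x)) (Icc (n:ℝ) ((n:ℝ)+1)) :=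
    fun x hx => ((hderiv x (by linarith [hx.1])).continuousAt).continuousWithinAt
  obtain ⟨c, hc, heq⟩ := exists_hasDerivAt_eq_slope (fun x : ℝ => Real.log (Real.log x))
    (fun x => (Real.log x)⁻¹ * x⁻¹) (by linarith : (n:ℝ) < (n:ℝ)+1) hcont
    (fun x hx => hderiv x (by linarith [hx.1]))
  have heq2 : (Real.log c)⁻¹ * c⁻¹
      = Real.log (Real.log ((n:ℝ)+1)) - Real.log (Real.log n) := by
    rw [heq]; norm_num
  rw [← heq2]
  have hlogn : 0 < Real.log n := Real.log_pos (by linarith)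
  have hlogc : Real.log n ≤ Real.log c :=
    Real.log_le_log (by linarith) (le_of_lt hc.1)
  have hc0 : (0:ℝ) < c := by linarith [hc.1]
  rw [mul_comm ((n:ℝ)) (Real.log (n:ℝ)), mul_inv]
  apply mul_le_mul
  · exact inv_anti₀ hlogn hlogc
  · exact inv_anti₀ (by linarith) (le_of_lt hc.1)
  · positivity
  · positivity

lemma Pr_tendsto (hm : 2 ≤ m) (N P : ℕ) :
    Tendsto (fun J => Pr m (fun n => if n < N then P + m else ⌊(n:ℝ) * Real.log n⌋₊ + m) J)
      atTop (nhds 0) := by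
  set M' : ℕ → ℕ := fun n => if n < N then P + m else ⌊(n:ℝ) * Real.log n⌋₊ + m with hM'def
  have hM' : ∀ n, m ≤ M' n := by
    intro n; simp only [hM'def]; split <;> omega
  set N₀ : ℕ := max N 3 with hN0
  set κ : ℝ := (m:ℝ)/((m:ℝ)+2) with hκ
  have hm0 : (0:ℝ) < (m:ℝ) := by exact_mod_cast (by omega : 0 < m)
  have hκpos : 0 < κ := by rw [hκ]; positivity
  set F : ℕ → ℝ := fun j => Real.log (Real.log ((j:ℝ)+1)) with hF
  have hlog3 : (1:ℝ) ≤ Real.log 3 := by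
    have he : Real.exp 1 ≤ 3 := Real.exp_one_lt_d9.le.trans (by norm_num)
    rwa [Real.le_log_iff_exp_le (by norm_num : (0:ℝ) < 3)]
  have hbnd : ∀ n : ℕ, 3 ≤ n → ¬ (n < N) →
      κ * (Real.log (Real.log ((n:ℝ)+1)) - Real.log (Real.log (n:ℝ)))
        ≤ (m:ℝ)/((M' n:ℝ)+1) := by
    intro n hn3 hnN
    have hn3' : (3:ℝ) ≤ (n:ℝ) := by exact_mod_cast hn3
    have hM'n : M' n = ⌊(n:ℝ) * Real.log n⌋₊ + m := by simp only [hM'def]; rw [if_neg hnN]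
    have hlogn : (1:ℝ) ≤ Real.log n := hlog3.trans (Real.log_le_log (by norm_num) hn3')
    have hnl1 : (1:ℝ) ≤ (n:ℝ) * Real.log n := by nlinarith
    have hfl : ((M' n:ℝ)+1) ≤ ((m:ℝ)+2) * ((n:ℝ) * Real.log n) := by
      have h1 : (⌊(n:ℝ) * Real.log n⌋₊ : ℝ) ≤ (n:ℝ)*Real.log n := Nat.floor_le (by nlinarith)
      rw [hM'n]
      push_cast
      nlinarith
    have hstep := loglog_step hn3
    calc κ * (Real.log (Real.log ((n:ℝ)+1)) - Real.log (Real.log (n:ℝ)))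
        ≤ κ * ((n:ℝ) * Real.log n)⁻¹ := mul_le_mul_of_nonneg_left hstep hκpos.le
      _ = (m:ℝ)/(((m:ℝ)+2) * ((n:ℝ) * Real.log n)) := by
          rw [hκ]
          field_simp
      _ ≤ (m:ℝ)/((M' n:ℝ)+1) := by
          apply div_le_div_of_nonneg_left hm0.le (by positivity) hfl
  have hglb : ∀ i : ℕ, N₀ ≤ i → κ * (F (i+1) - F i) ≤ (m:ℝ)/((M' (i+1):ℝ)+1) := by
    intro i hi
    have hFcast : F (i+1) - F i
        = Real.log (Real.log (((i+1:ℕ):ℝ)+1)) - Real.log (Real.log ((i+1:ℕ):ℝ)) := by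
      simp only [hF]
      push_cast
      ring_nf
    rw [hFcast]
    exact hbnd (i+1) (by omega) (by omega)
  have key : ∀ J, N₀ ≤ J →
      Pr m M' J ≤ Real.exp (-(κ * (F J - F N₀))) := by
    intro J hJ
    have hsplit := (Finset.prod_range_mul_prod_Ico
      (fun i => (1 - (m:ℝ)/((M' (i+1):ℝ)+1))) hJ).symm
    have h1 : (∏ i ∈ Finset.range N₀, (1 - (m:ℝ)/((M' (i+1):ℝ)+1))) ≤ 1 :=
      Finset.prod_le_one (fun i _ => (fac_nonneg hm hM' (i+1)).1)
        (fun i _ => (fac_nonneg hm hM' (i+1)).2)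
    have h2 : 0 ≤ ∏ i ∈ Finset.Ico N₀ J, (1 - (m:ℝ)/((M' (i+1):ℝ)+1)) :=
      Finset.prod_nonneg (fun i _ => (fac_nonneg hm hM' (i+1)).1)
    have h3 : (∏ i ∈ Finset.Ico N₀ J, (1 - (m:ℝ)/((M' (i+1):ℝ)+1)))
        ≤ ∏ i ∈ Finset.Ico N₀ J, Real.exp (-((m:ℝ)/((M' (i+1):ℝ)+1))) := by
      apply Finset.prod_le_prod (fun i _ => (fac_nonneg hm hM' (i+1)).1)
      intro i _
      have := Real.add_one_le_exp (-((m:ℝ)/((M' (i+1):ℝ)+1)))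
      linarith
    have h4 : (∏ i ∈ Finset.Ico N₀ J, Real.exp (-((m:ℝ)/((M' (i+1):ℝ)+1))))
        = Real.exp (-(∑ i ∈ Finset.Ico N₀ J, (m:ℝ)/((M' (i+1):ℝ)+1))) := by
      rw [← Real.exp_sum, Finset.sum_neg_distrib]
    have h5 : κ * (F J - F N₀) ≤ ∑ i ∈ Finset.Ico N₀ J, (m:ℝ)/((M' (i+1):ℝ)+1) := by
      have htel : (∑ i ∈ Finset.Ico N₀ J, (F (i+1) - F i)) = F J - F N₀ := by
        rw [Finset.sum_Ico_eq_sub _ hJ, Finset.sum_range_sub F, Finset.sum_range_sub F]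
        ring
      calc κ * (F J - F N₀) = ∑ i ∈ Finset.Ico N₀ J, κ * (F (i+1) - F i) := by
            rw [← Finset.mul_sum, htel]
        _ ≤ _ := Finset.sum_le_sum (fun i hi => hglb i (Finset.mem_Ico.1 hi).1)
    calc Pr m M' J = _ := hsplit
      _ ≤ ∏ i ∈ Finset.Ico N₀ J, (1 - (m:ℝ)/((M' (i+1):ℝ)+1)) :=
          mul_le_of_le_one_left h2 h1
      _ ≤ Real.exp (-(∑ i ∈ Finset.Ico N₀ J, (m:ℝ)/((M' (i+1):ℝ)+1))) := by
          rw [← h4]; exact h3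
      _ ≤ Real.exp (-(κ * (F J - F N₀))) := by
          apply Real.exp_le_exp.2
          linarith [h5]
  have hFtend : Tendsto F atTop atTop := by
    apply Real.tendsto_log_atTop.comp
    apply Real.tendsto_log_atTop.comp
    exact tendsto_atTop_add_const_right _ 1 tendsto_natCast_atTop_atTop
  have hlim : Tendsto (fun J : ℕ => Real.exp (-(κ * (F J - F N₀)))) atTop (nhds 0) := by
    apply Real.tendsto_exp_atBot.comp
    apply Filter.tendsto_neg_atTop_atBot.comp
    apply Filter.Tendsto.const_mul_atTop hκpos
    exact tendsto_atTop_add_const_right _ (-(F N₀)) hFtend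
  apply tendsto_of_tendsto_of_tendsto_of_le_of_le' tendsto_const_nhds hlim
  · exact Eventually.of_forall fun J => Pr_nonneg hm hM' J
  · exact eventually_atTop.2 ⟨N₀, key⟩

end Aux

/-- For a.e. x ∈ (0,θ), a_n(x) > n·log n for infinitely many n. -/
theorem stmt_10 (m : ℕ) (hm : 2 ≤ m) :
    ∀ᵐ x ∂(volume.restrict (Set.Ioo 0 (th m))),
      {n : ℕ | 1 ≤ n ∧ (n : ℝ) * Real.log n < (a m n x : ℝ)}.Infinite := by
  rw [MeasureTheory.ae_restrict_iff' measurableSet_Ioo, ae_iff]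
  have hsub : {x : ℝ | ¬ (x ∈ Ioo 0 (th m) →
        ({n : ℕ | 1 ≤ n ∧ (n : ℝ) * Real.log n < (a m n x : ℝ)}).Infinite)}
      ⊆ {x | x ∈ Ioo 0 (th m) ∧ ¬ (∀ j, (T m)^[j] x ∈ Ioo 0 (th m))} ∪
        ⋃ (N : ℕ) (P : ℕ),
          BadSet m (fun n => if n < N then P + m else ⌊(n:ℝ) * Real.log n⌋₊ + m) := by
    intro x hx
    simp only [mem_setOf_eq, Classical.not_imp] at hx
    obtain ⟨hxIoo, hfin⟩ := hx
    by_cases htraj : ∀ j, (T m)^[j] x ∈ Ioo 0 (th m)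
    · right
      have hfin' := Set.not_infinite.1 hfin
      obtain ⟨b, hb⟩ := hfin'.bddAbove
      set N := b + 1 with hN
      set P := Finset.sup (Finset.range N) (fun n => a m n x) with hP
      refine mem_iUnion.2 ⟨N, mem_iUnion.2 ⟨P, hxIoo, htraj, ?_⟩⟩
      intro n hn1
      show a m n x ≤ if n < N then P + m else ⌊(n:ℝ) * Real.log n⌋₊ + m
      by_cases hnN : n < N
      · rw [if_pos hnN]
        have : a m n x ≤ P := Finset.le_sup (f := fun n => a m n x) (Finset.mem_range.2 hnN)
        omega
      · rw [if_neg hnN]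
        have hnb : ¬ ((n:ℝ) * Real.log n < (a m n x : ℝ)) := by
          intro hlt
          have hmem : n ∈ {n : ℕ | 1 ≤ n ∧ (n : ℝ) * Real.log n < (a m n x : ℝ)} :=
            ⟨hn1, hlt⟩
          have := hb hmem
          omega
        have hle : (a m n x : ℝ) ≤ (n:ℝ) * Real.log n := le_of_not_gt hnb
        have := Nat.le_floor hle
        omega
    · left; exact ⟨hxIoo, htraj⟩
  apply measure_mono_null hsub
  apply measure_union_null
  · exact (traj_bad_countable hm).measure_zero _
  · apply measure_iUnion_null
    intro N
    apply measure_iUnion_null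
    intro P
    refine BadSet_null hm ?_ (Pr_tendsto hm N P)
    intro n
    show m ≤ if n < N then P + m else ⌊(n:ℝ) * Real.log n⌋₊ + m
    by_cases h : n < N
    · rw [if_pos h]; omega
    · rw [if_neg h]; omega

end Theta
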